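/- Let f : ℝ² → ℝ be continuously differentiable, S = {f = 0}, and let C be a compact connected component of S contained in the nonsingular locus of S. Then the set {P ∈ C : ∂f/∂X_2(P) = 0} is nonempty; in fact it contains a point where X_1 attains its maximum on C and a point where X_1 attains its minimum on C. -/

import Mathlib

open Filter Topology Set

private lemma key (f : ℝ × ℝ → ℝ) (hf : ContDiff ℝ 1 f)
    (S : Set (ℝ × ℝ)) (hS : S = {p | f p = 0})
    (C : Set (ℝ × ℝ)) (hCconn : IsConnected C) (hCS : C ⊆ S)
    (hCmax : ∀ D, IsConnected D → C ⊆ D → D ⊆ S → D = C)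
    (P : ℝ × ℝ) (hP : P ∈ C) (h2 : fderiv ℝ f P (0, 1) ≠ 0) :
    (∃ x ∈ C, P.1 < x.1) ∧ (∃ x ∈ C, x.1 < P.1) := by
  set f' := fderiv ℝ f P with hf'def
  have hst : HasStrictFDerivAt f f' P :=
    (hf.contDiffAt).hasStrictFDerivAt one_ne_zero
  have hfP : f P = 0 := by
    have := hCS hP; rw [hS] at this; exact this
  have hsurj : f'.range = ⊤ := by
    rw [LinearMap.range_eq_top]
    intro c
    exact ⟨(c / f' (0, 1)) • ((0 : ℝ), (1 : ℝ)), by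
      rw [map_smul, smul_eq_mul, ContinuousLinearMap.coe_coe, div_mul_cancel₀ _ h2]⟩
  -- kernel vector with first coordinate 1
  set v : ℝ × ℝ := (1, -(f' (1, 0)) / f' (0, 1)) with hvdef
  have hvker : f' v = 0 := by
    have hv : v = ((1 : ℝ), (0 : ℝ)) + (-(f' (1, 0)) / f' (0, 1)) • ((0 : ℝ), (1 : ℝ)) := by
      simp [hvdef, Prod.ext_iff]
    rw [hv, map_add, map_smul, smul_eq_mul, div_mul_cancel₀ _ h2]
    ring
  set vk : f'.ker := ⟨v, LinearMap.mem_ker.2 hvker⟩ with hvkdef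
  set H := hst.implicitToOpenPartialHomeomorph f f' hsurj with hHdef
  set ψ : ℝ → ℝ × ℝ := fun t => H.symm ((0 : ℝ), t • vk) with hψdef
  have hHP : H P = ((0 : ℝ), (0 : f'.ker)) := by
    rw [hHdef, HasStrictFDerivAt.implicitToOpenPartialHomeomorph_self, hfP]
  have hψ0 : ψ 0 = P := by
    rw [hψdef]
    simp only [zero_smul]
    rw [← hHP]
    exact H.left_inv (hst.mem_implicitToOpenPartialHomeomorph_source hsurj)
  -- open set of parameters
  set U : Set ℝ := (fun t : ℝ => (((0 : ℝ), t • vk) : ℝ × f'.ker)) ⁻¹' H.target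
    with hUdef
  have hcontmap : Continuous (fun t : ℝ => (((0 : ℝ), t • vk) : ℝ × f'.ker)) := by
    fun_prop
  have hUopen : IsOpen U := H.open_target.preimage hcontmap
  have hU0 : (0 : ℝ) ∈ U := by
    have : (((0 : ℝ), (0 : f'.ker)) : ℝ × f'.ker) ∈ H.target := by
      rw [← hHP]; exact H.map_source (hst.mem_implicitToOpenPartialHomeomorph_source hsurj)
    simpa [hUdef, zero_smul] using this
  have hfψ : ∀ t ∈ U, f (ψ t) = 0 := by
    intro t ht
    have h1 : f (H.symm ((0 : ℝ), t • vk)) =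
        (H (H.symm ((0 : ℝ), t • vk))).1 := by
      rw [hHdef, HasStrictFDerivAt.implicitToOpenPartialHomeomorph_fst]
    rw [hψdef]
    simp only
    rw [h1, H.right_inv ht]
  -- derivative of first coordinate of ψ at 0 is 1
  have hsub : HasStrictFDerivAt (fun z : f'.ker => H.symm ((0 : ℝ), z))
      (Submodule.subtypeL (f'.ker)) 0 := by
    have := hst.to_implicitFunction hsurj
    rw [hfP] at this
    exact this
  have hlin : HasStrictFDerivAt (fun t : ℝ => t • vk)
      ((1 : ℝ →L[ℝ] ℝ).smulRight vk) 0 := by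
    have := ((1 : ℝ →L[ℝ] ℝ).smulRight vk).hasStrictFDerivAt (x := (0 : ℝ))
    convert this using 1; funext t; simp
  have hsub' : HasStrictFDerivAt (fun z : f'.ker => H.symm ((0 : ℝ), z))
      (Submodule.subtypeL (f'.ker)) ((0 : ℝ) • vk) := by
    rw [zero_smul]; exact hsub
  have hψd : HasStrictFDerivAt ψ
      ((Submodule.subtypeL (f'.ker)).comp ((1 : ℝ →L[ℝ] ℝ).smulRight vk)) 0 :=
    hsub'.comp (0 : ℝ) hlin
  set g : ℝ → ℝ := fun t => (ψ t).1 with hgdef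
  have hgd : HasDerivAt g 1 0 := by
    have h3 : HasStrictFDerivAt g
        ((ContinuousLinearMap.fst ℝ ℝ ℝ).comp
          ((Submodule.subtypeL (f'.ker)).comp ((1 : ℝ →L[ℝ] ℝ).smulRight vk))) 0 :=
      (ContinuousLinearMap.fst ℝ ℝ ℝ).hasStrictFDerivAt.comp 0 hψd
    have h4 := h3.hasFDerivAt.hasDerivAt
    simpa [hvkdef, hvdef] using h4
  have hslope : Tendsto (slope g 0) (𝓝[≠] (0:ℝ)) (𝓝 1) :=
    hasDerivAt_iff_tendsto_slope.1 hgd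
  have hslope_pos : ∀ᶠ t in 𝓝[≠] (0:ℝ), 0 < slope g 0 t :=
    hslope.eventually (eventually_gt_nhds one_pos)
  -- pick ε with Ioo (-ε) ε ⊆ U
  obtain ⟨ε, hε, hball⟩ := Metric.mem_nhds_iff.1 (hUopen.mem_nhds hU0)
  have hIooU : Ioo (-ε) ε ⊆ U := by
    intro t ht
    apply hball
    rw [Real.ball_eq_Ioo]
    constructor <;> [linarith [ht.1]; linarith [ht.2]]
  -- pick t₊ t₋
  have hpos : ∃ t ∈ Ioo (0:ℝ) ε, 0 < slope g 0 t := by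
    have h5 : Ioo (0:ℝ) ε ∈ 𝓝[>] (0:ℝ) := Ioo_mem_nhdsGT_of_mem ⟨le_refl 0, hε⟩
    have h6 : ∀ᶠ t in 𝓝[>] (0:ℝ), 0 < slope g 0 t :=
      nhdsWithin_mono _ (fun x hx => ne_of_gt hx) hslope_pos
    exact ((eventually_mem_set.2 h5).and h6).exists
  have hneg : ∃ t ∈ Ioo (-ε) (0:ℝ), 0 < slope g 0 t := by
    have h5 : Ioo (-ε) (0:ℝ) ∈ 𝓝[<] (0:ℝ) := Ioo_mem_nhdsLT_of_mem ⟨neg_lt_zero.2 hε, le_refl 0⟩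
    have h6 : ∀ᶠ t in 𝓝[<] (0:ℝ), 0 < slope g 0 t :=
      nhdsWithin_mono _ (fun x hx => ne_of_lt hx) hslope_pos
    exact ((eventually_mem_set.2 h5).and h6).exists
  obtain ⟨tp, htp, hsp⟩ := hpos
  obtain ⟨tn, htn, hsn⟩ := hneg
  have hg0 : g 0 = P.1 := by rw [hgdef]; simp [hψ0]
  have hgp : P.1 < g tp := by
    have h := hsp
    rw [slope_def_field] at h
    rcases div_pos_iff.1 h with ⟨hn, _⟩ | ⟨_, hd⟩
    · linarith [hn]
    · linarith [htp.1]
  have hgn : g tn < P.1 := by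
    have h := hsn
    rw [slope_def_field] at h
    rcases div_pos_iff.1 h with ⟨_, hd⟩ | ⟨hn, _⟩
    · linarith [htn.2]
    · linarith [hn]
  -- connect
  have hIccU : Icc tn tp ⊆ U := fun t ht =>
    hIooU ⟨lt_of_lt_of_le htn.1 ht.1, lt_of_le_of_lt ht.2 htp.2⟩
  have hψcont : ContinuousOn ψ (Icc tn tp) := by
    apply H.continuousOn_symm.comp hcontmap.continuousOn
    intro t ht
    exact hIccU ht
  have himconn : IsConnected (ψ '' Icc tn tp) := by
    refine ⟨⟨ψ 0, ⟨0, ⟨le_of_lt htn.2, le_of_lt htp.1⟩, rfl⟩⟩, ?_⟩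
    exact (isPreconnected_Icc).image ψ hψcont
  have hD : C ∪ ψ '' Icc tn tp = C := by
    apply hCmax
    · exact IsConnected.union ⟨P, hP, ⟨0, ⟨le_of_lt htn.2, le_of_lt htp.1⟩, hψ0⟩⟩ hCconn himconn
    · exact subset_union_left
    · rintro x (hx | ⟨t, ht, rfl⟩)
      · exact hCS hx
      · rw [hS]; exact hfψ t (hIccU ht)
  constructor
  · exact ⟨ψ tp, hD ▸ Or.inr ⟨tp, ⟨le_of_lt (htn.2.trans htp.1), le_refl tp⟩, rfl⟩, hgp⟩
  · exact ⟨ψ tn, hD ▸ Or.inr ⟨tn, ⟨le_refl tn, le_of_lt (htn.2.trans htp.1)⟩, rfl⟩, hgn⟩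

/-- Let `f : ℝ² → ℝ` be `C¹`, `S = {f = 0}`, and `C` a compact connected component of `S`
contained in the nonsingular locus of `S`. Then `{P ∈ C | ∂f/∂X₂(P) = 0}` is nonempty;
in fact it contains a point where `X₁` attains its maximum on `C` and a point where `X₁`
attains its minimum on `C`. -/
theorem stmt10 (f : ℝ × ℝ → ℝ) (hf : ContDiff ℝ 1 f)
    (S : Set (ℝ × ℝ)) (hS : S = {p | f p = 0})
    (C : Set (ℝ × ℝ)) (hCconn : IsConnected C) (hCS : C ⊆ S)
    (hCmax : ∀ D, IsConnected D → C ⊆ D → D ⊆ S → D = C)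
    (hCcpt : IsCompact C)
    (hns : ∀ p ∈ C, fderiv ℝ f p ≠ 0) :
    (∃ P ∈ C, (∀ x ∈ C, x.1 ≤ P.1) ∧ fderiv ℝ f P (0, 1) = 0) ∧
    (∃ Q ∈ C, (∀ x ∈ C, Q.1 ≤ x.1) ∧ fderiv ℝ f Q (0, 1) = 0) := by
  obtain ⟨P, hP, hPmax⟩ := hCcpt.exists_isMaxOn hCconn.nonempty
    (continuous_fst.continuousOn)
  obtain ⟨Q, hQ, hQmin⟩ := hCcpt.exists_isMinOn hCconn.nonempty
    (continuous_fst.continuousOn)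
  constructor
  · refine ⟨P, hP, fun x hx => hPmax hx, ?_⟩
    by_contra h2
    obtain ⟨⟨x, hx, hxgt⟩, _⟩ := key f hf S hS C hCconn hCS hCmax P hP h2
    exact absurd (hPmax hx) (not_le.2 hxgt)
  · refine ⟨Q, hQ, fun x hx => hQmin hx, ?_⟩
    by_contra h2
    obtain ⟨_, ⟨x, hx, hxlt⟩⟩ := key f hf S hS C hCconn hCS hCmax Q hQ h2
    exact absurd (hQmin hx) (not_le.2 hxlt)
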